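/- Let (L,Q) be a definite ternary quadratic lattice over A = 𝔽_q[t] with reduced basis v₁, v₂, v₃, reduced Gram matrix entries mᵢⱼ, and successive minima μ₁ ≤ μ₂ ≤ μ₃ (μᵢ = deg mᵢᵢ). Let M = A v₁ + A v₂. Then for every nonzero w ∈ M, deg B(w, v₃) < deg Q(w), where B is the associated bilinear form. -/

import Mathlib

open Polynomial FunctionField Matrix

noncomputable section

variable (Fq : Type) [Field Fq] [Fintype Fq] [DecidableEq (RatFunc Fq)]

/-- The canonical ring homomorphism from `Fq(t)` to its completion at infinity. -/
def toInfty : RatFunc Fq →+* RatFunc.CompletionAtInfty Fq :=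
  letI := RatFunc.inftyValued Fq
  UniformSpace.Completion.coeRingHom

/-- The quadratic form attached to a Gram matrix. -/
def Qval (M : Matrix (Fin 3) (Fin 3) (RatFunc Fq)) (v : Fin 3 → RatFunc Fq) : RatFunc Fq :=
  v ⬝ᵥ (M.mulVec v)

/-- A ternary quadratic lattice (Gram matrix over `K = Fq(t)`) is definite if it is
anisotropic over `Fq((1/t))`. -/
def IsDefinite (M : Matrix (Fin 3) (Fin 3) (RatFunc Fq)) : Prop :=
  ∀ w : Fin 3 → RatFunc.CompletionAtInfty Fq, w ⬝ᵥ ((M.map (toInfty Fq)).mulVec w) = 0 → w = 0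

/-- Degree of a rational function, with `deg 0 = ⊥`. -/
def degK (x : RatFunc Fq) : WithBot ℤ := if x = 0 then ⊥ else (x.intDegree : WithBot ℤ)

/-- The Gram matrix of a reduced basis. -/
def IsReducedGram (M : Matrix (Fin 3) (Fin 3) (RatFunc Fq)) : Prop :=
  M.IsSymm ∧ (∀ i j : Fin 3, i ≤ j → degK Fq (M i i) ≤ degK Fq (M j j)) ∧
    ∀ i j : Fin 3, i < j → degK Fq (M i j) < degK Fq (M i i)

/-- The value of the quadratic form at a vector of the lattice `A³`, `A = Fq[t]`. -/
def QA (M : Matrix (Fin 3) (Fin 3) (RatFunc Fq)) (v : Fin 3 → Polynomial Fq) : RatFunc Fq :=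
  Qval Fq M (fun i => algebraMap (Polynomial Fq) (RatFunc Fq) (v i))

/-- Two ternary lattices are isospectral if they have the same representation numbers. -/
def Isospectral (M M' : Matrix (Fin 3) (Fin 3) (RatFunc Fq)) : Prop :=
  ∀ a : RatFunc Fq, Nat.card {v : Fin 3 → Polynomial Fq // QA Fq M v = a}
    = Nat.card {v : Fin 3 → Polynomial Fq // QA Fq M' v = a}

/-- Two ternary lattices are isometric over `A = Fq[t]`. -/
def IsometricA (M M' : Matrix (Fin 3) (Fin 3) (RatFunc Fq)) : Prop :=
  ∃ U : Matrix (Fin 3) (Fin 3) (Polynomial Fq), IsUnit U.det ∧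
    (U.map (algebraMap (Polynomial Fq) (RatFunc Fq)))ᵀ * M
      * (U.map (algebraMap (Polynomial Fq) (RatFunc Fq))) = M'


/-- The associated bilinear form on the lattice `A³`. -/
def BA (M : Matrix (Fin 3) (Fin 3) (RatFunc Fq)) (v w : Fin 3 → Polynomial Fq) : RatFunc Fq :=
  QA Fq M (v + w) - QA Fq M v - QA Fq M w

/-! ### Auxiliary material -/

open Multiplicative Filter
open scoped WithZero

theorem mul_lt_mul_of_lt_of_le₀ {α : Type*} [LinearOrderedCommGroupWithZero α] {a b c d : α}
    (hab : a ≤ b) (hb : b ≠ 0) (hcd : c < d) : a * c < b * d :=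
  lt_of_le_of_lt (mul_le_mul_of_nonneg_right hab zero_le') (mul_lt_mul_of_pos_left hcd (zero_lt_iff.mpr hb))

lemma aux_pow_eventually_lt (δ : ℤᵐ⁰) (hδ : δ < 1) (γ : ℤᵐ⁰) (hγ : γ ≠ 0) :
    ∃ N : ℕ, ∀ n ≥ N, δ ^ (n + 1) < γ := by
  rcases eq_or_ne δ 0 with rfl | hδ0
  · exact ⟨0, fun n _ => by simpa [pow_succ] using (zero_lt_iff.mpr hγ)⟩
  obtain ⟨d, rfl⟩ := WithZero.ne_zero_iff_exists.mp hδ0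
  obtain ⟨g, rfl⟩ := WithZero.ne_zero_iff_exists.mp hγ
  have hd : toAdd d < 0 := by
    have : d < 1 := by exact_mod_cast hδ
    exact toAdd_lt.mpr this
  refine ⟨(toAdd g).natAbs, fun n hn => ?_⟩
  have key : (n + 1 : ℤ) * toAdd d < toAdd g := by
    have h1 : (n + 1 : ℤ) * toAdd d ≤ (n + 1 : ℤ) * (-1) := by
      apply mul_le_mul_of_nonneg_left (by omega) (by positivity)
    have h2 : -(toAdd g).natAbs ≤ toAdd g := by omega
    have h3 : ((toAdd g).natAbs : ℤ) ≤ n := by exact_mod_cast hn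
    nlinarith
  have : (d ^ (n+1) : Multiplicative ℤ) < g := by
    rw [← ofAdd_toAdd (d ^ (n+1)), ← ofAdd_toAdd g, Multiplicative.ofAdd_lt, toAdd_pow]
    simpa [nsmul_eq_mul] using key
  exact_mod_cast this

section Sqrt
variable {F : Type*} [Field F] [Valued F ℤᵐ⁰] [CompleteSpace F]

theorem aux_exists_sqrt_one_sub (h2 : Valued.v (2 : F) = 1) (ε : F) (hε : Valued.v ε < 1) :
    ∃ z : F, z * z = 1 - ε := by
  rcases eq_or_ne ε 0 with rfl | hε0
  · exact ⟨1, by ring⟩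
  set v : Valuation F ℤᵐ⁰ := Valued.v with hv
  set δ : ℤᵐ⁰ := v ε with hδdef
  have hδ0 : δ ≠ 0 := (Valuation.ne_zero_iff v).mpr hε0
  have hδ1 : δ < 1 := hε
  have hδle1 : δ ≤ 1 := le_of_lt hδ1
  set w : F := 1 - ε with hw
  set zs : ℕ → F := fun n => Nat.rec (1 : F) (fun _ zn => zn - (zn * zn - w) / (2 * zn)) n with hzs
  have hzs0 : zs 0 = 1 := rfl
  have hzsS : ∀ n, zs (n + 1) = zs n - (zs n * zs n - w) / (2 * zs n) := fun n => rfl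
  have inv : ∀ n, v (zs n - 1) < 1 ∧ v (zs n * zs n - w) ≤ δ ^ (n + 1) := by
    intro n
    induction n with
    | zero =>
      constructor
      · simpa [hzs0] using (zero_lt_one : (0:ℤᵐ⁰) < 1)
      · simp [hzs0, hw, hδdef]
    | succ n ih =>
      obtain ⟨ih1, ih2⟩ := ih
      have hvz : v (zs n) = 1 := by
        have : zs n = 1 + (zs n - 1) := by ring
        rw [this, Valuation.map_add_eq_of_lt_left _ (by simpa using ih1)]
        simp
      have hz0 : zs n ≠ 0 := by
        intro h; rw [h] at hvz; simp at hvz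
      have h2z : v (2 * zs n) = 1 := by rw [Valuation.map_mul, hvz, h2, mul_one]
      have h2z0 : (2 : F) * zs n ≠ 0 := by
        intro h; rw [h] at h2z; simp at h2z
      set h : F := (zs n * zs n - w) / (2 * zs n) with hh
      have hvh : v h = v (zs n * zs n - w) := by
        rw [hh, Valuation.map_div, h2z, div_one]
      have hvh' : v h ≤ δ ^ (n + 1) := hvh ▸ ih2
      have hδpow : (δ : ℤᵐ⁰) ^ (n + 1) ≤ δ := by
        calc δ ^ (n+1) = δ ^ n * δ := pow_succ δ n
        _ ≤ 1 * δ := mul_le_mul_left (pow_le_one' hδle1 n) δ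
        _ = δ := one_mul δ
      constructor
      · rw [hzsS]
        have : zs n - h - 1 = (zs n - 1) - h := by ring
        rw [this]
        exact lt_of_le_of_lt (Valuation.map_sub _ _ _)
          (max_lt ih1 (lt_of_le_of_lt (le_trans hvh' hδpow) hδ1))
      · rw [hzsS]
        have hid : (zs n - h) * (zs n - h) - w
            = (zs n * zs n - w) - (2 * zs n) * h + h * h := by ring
        have hcancel : (2 * zs n) * h = zs n * zs n - w := by
          rw [hh]; field_simp; exact mul_div_cancel_left₀ _ (left_ne_zero_of_mul h2z0)
        rw [hid, hcancel]
        have : (zs n * zs n - w) - (zs n * zs n - w) + h * h = h * h := by ring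
        rw [this, Valuation.map_mul]
        calc v h * v h ≤ δ ^ (n+1) * δ ^ (n+1) := mul_le_mul' hvh' hvh'
          _ = δ ^ (n+2) * δ ^ n := by rw [← pow_add, ← pow_add]; congr 1; omega
          _ ≤ δ ^ (n+2) * 1 := mul_le_mul_right (pow_le_one' hδle1 n) _
          _ = δ ^ (n+2) := mul_one _
  have hdiff : ∀ n, v (zs (n+1) - zs n) ≤ δ ^ (n + 1) := by
    intro n
    obtain ⟨ih1, ih2⟩ := inv n
    have hvz : v (zs n) = 1 := by
      have : zs n = 1 + (zs n - 1) := by ring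
      rw [this, Valuation.map_add_eq_of_lt_left _ (by simpa using ih1)]
      simp
    have h2z : v (2 * zs n) = 1 := by rw [Valuation.map_mul, hvz, h2, mul_one]
    rw [hzsS]
    have : zs n - (zs n * zs n - w) / (2 * zs n) - zs n
        = -((zs n * zs n - w) / (2 * zs n)) := by ring
    rw [this, Valuation.map_neg, Valuation.map_div, h2z, div_one]
    exact ih2
  have htel : ∀ n k, v (zs (n + k) - zs n) ≤ δ ^ (n + 1) := by
    intro n k
    induction k with
    | zero => simp
    | succ k ih =>
      have : zs (n + (k+1)) - zs n = (zs (n + k + 1) - zs (n + k)) + (zs (n + k) - zs n) := by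
        have : n + (k+1) = n + k + 1 := by ring
        rw [this]; ring
      rw [this]
      refine le_trans (Valuation.map_add _ _ _) (max_le ?_ ih)
      refine le_trans (hdiff (n+k)) ?_
      exact pow_le_pow_right_of_le_one' hδle1 (by omega)
  have hcauchy : CauchySeq zs := by
    rw [(Valued.hasBasis_uniformity F ℤᵐ⁰).cauchySeq_iff]
    intro γ _
    obtain ⟨N, hN⟩ := aux_pow_eventually_lt δ hδ1 (MonoidWithZeroHom.ValueGroup₀.embedding γ.1) (by simp)
    refine ⟨N, fun m hm n hn => ?_⟩
    show v.restrict (zs n - zs m) < γ.1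
    rw [Valuation.restrict_lt_iff_lt_embedding]
    have hbound : v (zs n - zs m) ≤ δ ^ (N + 1) := by
      obtain ⟨k, rfl⟩ := Nat.exists_eq_add_of_le hm
      obtain ⟨l, rfl⟩ := Nat.exists_eq_add_of_le hn
      have : zs (N + l) - zs (N + k) = (zs (N + l) - zs N) - (zs (N + k) - zs N) := by ring
      rw [this]
      exact le_trans (Valuation.map_sub _ _ _) (max_le (htel N l) (htel N k))
    exact lt_of_le_of_lt hbound (hN N le_rfl)
  obtain ⟨L, hL⟩ := cauchySeq_tendsto_of_complete hcauchy
  refine ⟨L, ?_⟩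
  have h1 : Tendsto (fun n => zs n * zs n - w) atTop (nhds (L * L - w)) :=
    ((hL.mul hL).sub tendsto_const_nhds)
  have h0 : Tendsto (fun n => zs n * zs n - w) atTop (nhds 0) := by
    rw [(Valued.hasBasis_nhds_zero F ℤᵐ⁰).tendsto_right_iff]
    intro γ _
    obtain ⟨N, hN⟩ := aux_pow_eventually_lt δ hδ1 (MonoidWithZeroHom.ValueGroup₀.embedding γ.1) (by simp)
    filter_upwards [eventually_ge_atTop N] with n hn
    show v.restrict (zs n * zs n - w) < γ.1
    rw [Valuation.restrict_lt_iff_lt_embedding]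
    exact lt_of_le_of_lt ((inv n).2) (hN n hn)
  have hLw : L * L - w = 0 := tendsto_nhds_unique h1 h0
  rw [hw] at hLw
  linear_combination hLw

end Sqrt

instance : CompleteSpace (RatFunc.CompletionAtInfty Fq) :=
  @UniformSpace.Completion.completeSpace (RatFunc Fq) (RatFunc.inftyValued Fq).toUniformSpace

lemma aux_val_toInfty (x : RatFunc Fq) :
    Valued.v (toInfty Fq x) = RatFunc.inftyValuation Fq x := by
  rw [RatFunc.valuedCompletionAtInfty.def]
  letI := RatFunc.inftyValued Fq
  have h := Valued.extension_extends (K := RatFunc Fq) (Γ₀ := ℤᵐ⁰) x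
  rw [RatFunc.inftyValuation_apply, ← RatFunc.inftyValued.def]
  exact Valued.extensionValuation_apply_coe x

lemma aux_degK_lt_iff (x y : RatFunc Fq) :
    degK Fq x < degK Fq y ↔ RatFunc.inftyValuation Fq x < RatFunc.inftyValuation Fq y := by
  unfold degK
  rcases eq_or_ne x 0 with rfl | hx <;> rcases eq_or_ne y 0 with rfl | hy
  · simp [RatFunc.inftyValuation_apply, RatFunc.inftyValuationDef]
  · simp only [if_pos rfl, if_neg hy, RatFunc.inftyValuation_apply, RatFunc.inftyValuationDef]
    simp [WithZero.zero_lt_coe, hy]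
  · simp only [if_pos rfl, if_neg hx, RatFunc.inftyValuation_apply, RatFunc.inftyValuationDef]
    simp [hx]
  · simp only [if_neg hx, if_neg hy, RatFunc.inftyValuation_apply, RatFunc.inftyValuationDef]
    rw [WithZero.exp_lt_exp, WithBot.coe_lt_coe]

lemma aux_degK_le_iff (x y : RatFunc Fq) :
    degK Fq x ≤ degK Fq y ↔ RatFunc.inftyValuation Fq x ≤ RatFunc.inftyValuation Fq y := by
  rw [← not_lt, ← not_lt, not_iff_not, aux_degK_lt_iff]

set_option maxHeartbeats 2000000 in
/-- For `w` in the sublattice `A v₁ + A v₂` of a reduced definite ternary lattice,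
`deg B(w, v₃) < deg Q(w)`. -/
theorem stmt_5 (hodd : Odd (Fintype.card Fq))
    (M : Matrix (Fin 3) (Fin 3) (RatFunc Fq))
    (hdef : IsDefinite Fq M) (hred : IsReducedGram Fq M)
    (r s : Polynomial Fq) (hw : ![r, s, 0] ≠ (0 : Fin 3 → Polynomial Fq)) :
    degK Fq (BA Fq M ![r, s, 0] ![0, 0, 1]) < degK Fq (QA Fq M ![r, s, 0]) := by
  obtain ⟨hsymm, hmono, hoff⟩ := hred
  set ι : RatFunc Fq →+* RatFunc.CompletionAtInfty Fq := toInfty Fq with hι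
  set v : Valuation (RatFunc Fq) ℤᵐ⁰ := RatFunc.inftyValuation Fq with hvdef
  set a : RatFunc Fq := M 0 0 with ha
  set b : RatFunc Fq := M 0 1 with hb
  set c : RatFunc Fq := M 1 1 with hc
  set p : RatFunc Fq := M 0 2 with hp
  set q : RatFunc Fq := M 1 2 with hq
  have hsym10 : M 1 0 = b := hsymm.apply 0 1
  have hsym20 : M 2 0 = p := hsymm.apply 0 2
  have hsym21 : M 2 1 = q := hsymm.apply 1 2
  set x : RatFunc Fq := algebraMap (Polynomial Fq) (RatFunc Fq) r with hx
  set y : RatFunc Fq := algebraMap (Polynomial Fq) (RatFunc Fq) s with hy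
  -- expansion of the quadratic form
  have expand : ∀ u w' : RatFunc Fq, Qval Fq M ![u, w', 1]
      = a * (u*u) + (2*b) * (u*w') + c * (w'*w') + (2*p) * u + (2*q) * w' + M 2 2 := by
    intro u w'
    simp [Qval, Matrix.mulVec, dotProduct, Fin.sum_univ_three, hsym10, hsym20, hsym21,
      ← ha, ← hb, ← hc, ← hp, ← hq]
    ring
  have expand0 : ∀ u w' : RatFunc Fq, Qval Fq M ![u, w', 0]
      = a * (u*u) + (2*b) * (u*w') + c * (w'*w') := by
    intro u w'
    simp [Qval, Matrix.mulVec, dotProduct, Fin.sum_univ_three, hsym10,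
      ← ha, ← hb, ← hc]
    ring
  have expandInf : ∀ Z U : RatFunc.CompletionAtInfty Fq,
      (![Z, U, 0] ⬝ᵥ (M.map ι).mulVec ![Z, U, 0])
        = ι a * (Z*Z) + (ι b + ι b) * (Z*U) + ι c * (U*U) := by
    intro Z U
    simp [Matrix.mulVec, dotProduct, Fin.sum_univ_three, Matrix.map_apply, hsym10,
      ← ha, ← hb, ← hc]
    ring
  -- the two quantities in the statement
  have hv30 : (fun i => algebraMap (Polynomial Fq) (RatFunc Fq) (![r, s, 0] i)) = ![x, y, 0] := by
    funext i; fin_cases i <;> simp [hx, hy]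
  have hQAeq : QA Fq M ![r, s, 0] = a * (x*x) + (2*b) * (x*y) + c * (y*y) := by
    rw [QA, hv30, expand0]
  have hBAeq : BA Fq M ![r, s, 0] ![0, 0, 1] = (2*p) * x + (2*q) * y := by
    have hsum : (![r, s, 0] + ![0, 0, 1] : Fin 3 → Polynomial Fq) = ![r, s, 1] := by
      funext i; fin_cases i <;> simp
    have hv1 : (fun i => algebraMap (Polynomial Fq) (RatFunc Fq) (![r, s, 1] i)) = ![x, y, 1] := by
      funext i; fin_cases i <;> simp [hx, hy]
    have hv2 : (fun i => algebraMap (Polynomial Fq) (RatFunc Fq) (![(0:Polynomial Fq), 0, 1] i))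
        = ![(0:RatFunc Fq), 0, 1] := by
      funext i; fin_cases i <;> simp
    have h001 : Qval Fq M ![(0:RatFunc Fq), 0, 1] = M 2 2 := by simpa using expand 0 0
    rw [BA, hsum]
    unfold QA
    rw [hv1, hv30, hv2, expand x y, expand0 x y, h001]
    ring
  -- nonzero diagonal entries
  have hFqt1 : (1 : RatFunc.CompletionAtInfty Fq) ≠ 0 := one_ne_zero
  have ha0 : a ≠ 0 := by
    intro h0
    have hzero : (![1, 0, 0] : Fin 3 → RatFunc.CompletionAtInfty Fq) ⬝ᵥ (M.map ι).mulVec ![1, 0, 0] = 0 := by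
      rw [expandInf 1 0, h0]; simp
    have := congr_fun (hdef _ hzero) 0
    simpa using this
  have hc0 : c ≠ 0 := by
    intro h0
    have hzero : (![0, 1, 0] : Fin 3 → RatFunc.CompletionAtInfty Fq) ⬝ᵥ (M.map ι).mulVec ![0, 1, 0] = 0 := by
      rw [expandInf 0 1, h0]; simp
    have := congr_fun (hdef _ hzero) 1
    simpa using this
  -- valuation facts
  have hva : v a ≠ 0 := (Valuation.ne_zero_iff v).mpr ha0
  have hvc : v c ≠ 0 := (Valuation.ne_zero_iff v).mpr hc0
  have hba : v b < v a := (aux_degK_lt_iff Fq _ _).mp (hoff 0 1 (by decide))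
  have hpa : v p < v a := (aux_degK_lt_iff Fq _ _).mp (hoff 0 2 (by decide))
  have hqc : v q < v c := (aux_degK_lt_iff Fq _ _).mp (hoff 1 2 (by decide))
  have hac : v a ≤ v c := (aux_degK_le_iff Fq _ _).mp (hmono 0 1 (by decide))
  -- 2 is a unit
  have hchar : ringChar Fq ≠ 2 := by
    intro h
    have := FiniteField.even_card_of_char_two h
    have := Nat.odd_iff.mp hodd
    omega
  have h2Fq : (2 : Fq) ≠ 0 := Ring.two_ne_zero hchar
  have hv2 : v (2 : RatFunc Fq) = 1 := by
    have h2C : (2 : RatFunc Fq) = RatFunc.C (2 : Fq) := (map_ofNat RatFunc.C 2).symm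
    rw [hvdef, h2C, RatFunc.inftyValuation.C Fq h2Fq]
  have h2K : (2 : RatFunc Fq) ≠ 0 := by
    intro h; rw [h] at hv2; simp at hv2
  -- degrees of polynomial images
  have hpoly_ge : ∀ t : Polynomial Fq, t ≠ 0 → 1 ≤ v (algebraMap (Polynomial Fq) (RatFunc Fq) t) := by
    intro t ht
    rw [hvdef, RatFunc.inftyValuation_apply, RatFunc.inftyValuation.polynomial Fq ht]
    have : (1 : ℤᵐ⁰) = ((Multiplicative.ofAdd (0:ℤ) : Multiplicative ℤ) : ℤᵐ⁰) := rfl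
    rw [← WithZero.exp_zero, WithZero.exp_le_exp]
    exact_mod_cast Nat.zero_le _
  set X : ℤᵐ⁰ := v x with hX
  set Y : ℤᵐ⁰ := v y with hY
  set N : ℤᵐ⁰ := max (v a * (X * X)) (v c * (Y * Y)) with hN
  have hxr : r ≠ 0 → x ≠ 0 := fun h => RatFunc.algebraMap_ne_zero h
  have hyr : s ≠ 0 → y ≠ 0 := fun h => RatFunc.algebraMap_ne_zero h
  have hrs : r ≠ 0 ∨ s ≠ 0 := by
    by_contra h
    push_neg at h
    exact hw (by funext i; fin_cases i <;> simp [h.1, h.2])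
  have hN0 : (0:ℤᵐ⁰) < N := by
    rcases hrs with h | h
    · have hx0 : x ≠ 0 := hxr h
      have : X ≠ 0 := (Valuation.ne_zero_iff v).mpr hx0
      exact lt_of_lt_of_le (zero_lt_iff.mpr (mul_ne_zero hva (mul_ne_zero this this)))
        (le_max_left _ _)
    · have hy0 : y ≠ 0 := hyr h
      have : Y ≠ 0 := (Valuation.ne_zero_iff v).mpr hy0
      exact lt_of_lt_of_le (zero_lt_iff.mpr (mul_ne_zero hvc (mul_ne_zero this this)))
        (le_max_right _ _)
  -- bound for the bilinear term
  have hBlt : v ((2*p) * x + (2*q) * y) < N := by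
    have hterm1 : v ((2*p) * x) < N := by
      rcases eq_or_ne x 0 with h | h
      · rw [h, mul_zero]; simpa using hN0
      · have hX0 : X ≠ 0 := (Valuation.ne_zero_iff v).mpr h
        have hX1 : 1 ≤ X := by
          rw [hX, hx]; exact hpoly_ge r (fun hr0 => h (by rw [hx, hr0]; simp))
        have h1 : v ((2*p) * x) = X * v p := by
          rw [Valuation.map_mul, Valuation.map_mul, hv2, one_mul, mul_comm]
        rw [h1]
        calc X * v p < X * v a := mul_lt_mul_of_lt_of_le₀ le_rfl hX0 hpa
          _ = 1 * (X * v a) := (one_mul _).symm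
          _ ≤ X * (X * v a) := mul_le_mul_left hX1 _
          _ = v a * (X * X) := by simp [mul_comm, mul_left_comm, mul_assoc]
          _ ≤ N := le_max_left _ _
    have hterm2 : v ((2*q) * y) < N := by
      rcases eq_or_ne y 0 with h | h
      · rw [h, mul_zero]; simpa using hN0
      · have hY0 : Y ≠ 0 := (Valuation.ne_zero_iff v).mpr h
        have hY1 : 1 ≤ Y := by
          rw [hY, hy]; exact hpoly_ge s (fun hs0 => h (by rw [hy, hs0]; simp))
        have h1 : v ((2*q) * y) = Y * v q := by
          rw [Valuation.map_mul, Valuation.map_mul, hv2, one_mul, mul_comm]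
        rw [h1]
        calc Y * v q < Y * v c := mul_lt_mul_of_lt_of_le₀ le_rfl hY0 hqc
          _ = 1 * (Y * v c) := (one_mul _).symm
          _ ≤ Y * (Y * v c) := mul_le_mul_left hY1 _
          _ = v c * (Y * Y) := by simp [mul_comm, mul_left_comm, mul_assoc]
          _ ≤ N := le_max_right _ _
    exact lt_of_le_of_lt (Valuation.map_add _ _ _) (max_lt hterm1 hterm2)
  -- the key claim : the value of the quadratic form has the expected degree
  have hT1 : v (a * (x*x)) = v a * (X*X) := by rw [Valuation.map_mul, Valuation.map_mul]
  have hT3 : v (c * (y*y)) = v c * (Y*Y) := by rw [Valuation.map_mul, Valuation.map_mul]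
  have hT2 : v ((2*b) * (x*y)) < N := by
    rcases eq_or_ne (v b * (X * Y)) 0 with h0 | h0
    · have : v ((2*b) * (x*y)) = v b * (X*Y) := by
        rw [Valuation.map_mul, Valuation.map_mul, Valuation.map_mul, hv2, one_mul]
      rw [this, h0]; exact hN0
    · have hvb0 : v b ≠ 0 := fun h => h0 (by rw [h, zero_mul])
      have hXY0 : X * Y ≠ 0 := fun h => h0 (by rw [h, mul_zero])
      have hsq : (v b * (X*Y)) * (v b * (X*Y)) < N * N := by
        have h1 : v b * v b < v c * v a :=
          mul_lt_mul_of_lt_of_le₀ (le_trans (le_of_lt hba) hac) hvc hba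
        calc (v b * (X*Y)) * (v b * (X*Y)) = ((X*X)*(Y*Y)) * (v b * v b) := by
              simp [mul_comm, mul_left_comm, mul_assoc]
          _ < ((X*X)*(Y*Y)) * (v c * v a) :=
            mul_lt_mul_of_lt_of_le₀ le_rfl (by
              rcases mul_ne_zero_iff.mp hXY0 with ⟨h1', h2'⟩
              exact mul_ne_zero (mul_ne_zero h1' h1') (mul_ne_zero h2' h2')) h1
          _ = (v a * (X*X)) * (v c * (Y*Y)) := by simp [mul_comm, mul_left_comm, mul_assoc]
          _ ≤ N * N := mul_le_mul' (le_max_left _ _) (le_max_right _ _)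
      have : v ((2*b) * (x*y)) = v b * (X*Y) := by
        rw [Valuation.map_mul, Valuation.map_mul, Valuation.map_mul, hv2, one_mul]
      rw [this]
      by_contra hcon
      push_neg at hcon
      exact absurd hsq (not_lt.mpr (mul_le_mul' hcon hcon))
  have hQN : v (a * (x*x) + (2*b) * (x*y) + c * (y*y)) = N := by
    rcases eq_or_ne (v (a * (x*x))) (v (c * (y*y))) with heq | hne
    · -- hard case : possible cancellation, excluded by definiteness
      by_contra hQne
      -- first, v Q < N
      have hmax : max (v (a * (x*x))) (v (c * (y*y))) = N := by
        rw [hT1, hT3, hN]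
      have hQle : v (a * (x*x) + (2*b) * (x*y) + c * (y*y)) ≤ N := by
        have h13 : v (a * (x*x) + c * (y*y)) ≤ N :=
          le_trans (Valuation.map_add _ _ _) (le_of_eq hmax)
        have : a * (x*x) + (2*b) * (x*y) + c * (y*y)
            = (a * (x*x) + c * (y*y)) + (2*b) * (x*y) := by ring
        rw [this]
        exact le_trans (Valuation.map_add _ _ _) (max_le h13 (le_of_lt hT2))
      have hQlt : v (a * (x*x) + (2*b) * (x*y) + c * (y*y)) < N :=
        lt_of_le_of_ne hQle hQne
      have hx0 : x ≠ 0 := by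
        intro h
        have hyne : y ≠ 0 := by
          rcases hrs with h' | h'
          · exact absurd h (hxr h')
          · exact hyr h'
        have hY0 : Y ≠ 0 := (Valuation.ne_zero_iff v).mpr hyne
        rw [h] at heq
        simp only [mul_zero, Valuation.map_zero] at heq
        exact (mul_ne_zero hvc (mul_ne_zero hY0 hY0)) (hT3 ▸ heq.symm)
      have hy0 : y ≠ 0 := by
        intro h
        have hX0 : X ≠ 0 := (Valuation.ne_zero_iff v).mpr hx0
        rw [h] at heq
        simp only [mul_zero, Valuation.map_zero] at heq
        exact (mul_ne_zero hva (mul_ne_zero hX0 hX0)) (hT1 ▸ heq)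
      have hX0 : X ≠ 0 := (Valuation.ne_zero_iff v).mpr hx0
      have hY0 : Y ≠ 0 := (Valuation.ne_zero_iff v).mpr hy0
      have hEq2 : v a * (X*X) = v c * (Y*Y) := by rw [← hT1, ← hT3, heq]
      have hNc : N = v c * (Y * Y) := by rw [hN, hEq2, max_self]
      set u : RatFunc Fq := x / y with hu
      have hu0 : u ≠ 0 := div_ne_zero hx0 hy0
      have hvu0 : v u ≠ 0 := (Valuation.ne_zero_iff v).mpr hu0
      have hXuY : v u * Y = X := by
        rw [hu, Valuation.map_div]
        exact div_mul_cancel₀ X hY0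
      have hu1 : 1 ≤ v u := by
        by_contra hcon
        push_neg at hcon
        have hXY : X < Y := by
          have h1 : Y * v u < Y * 1 := mul_lt_mul_of_lt_of_le₀ le_rfl hY0 hcon
          rw [mul_one] at h1
          calc X = v u * Y := hXuY.symm
          _ = Y * v u := mul_comm _ _
          _ < Y := h1
        have hlt : v a * (X*X) < v c * (Y*Y) := by
          have hXX : X*X < Y*Y := mul_lt_mul_of_lt_of_le₀ (le_of_lt hXY) hY0 hXY
          exact mul_lt_mul_of_lt_of_le₀ hac hvc hXX
        exact absurd hEq2 (ne_of_lt hlt)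
      have hvau2 : v a * (v u * v u) = v c := by
        have h1 : (v a * (v u * v u)) * (Y * Y) = v c * (Y * Y) := by
          calc (v a * (v u * v u)) * (Y * Y) = v a * ((v u * Y) * (v u * Y)) := by
                simp [mul_comm, mul_left_comm, mul_assoc]
          _ = v a * (X * X) := by rw [hXuY]
          _ = v c * (Y * Y) := hEq2
        exact mul_right_cancel₀ (mul_ne_zero hY0 hY0) h1
      set g : RatFunc Fq := a * (u*u) + (2*b) * u + c with hg
      have hyyg : (y*y) * g = a * (x*x) + (2*b) * (x*y) + c * (y*y) := by
        rw [hg, hu]; field_simp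
      have hvg : v g < v c := by
        by_contra hcon
        push_neg at hcon
        have h1 : v ((y*y) * g) = (Y*Y) * v g := by
          rw [Valuation.map_mul, Valuation.map_mul]
        have h2 : N ≤ (Y*Y) * v g := by
          rw [hNc]
          calc v c * (Y*Y) ≤ v g * (Y*Y) := mul_le_mul_left hcon _
          _ = (Y*Y) * v g := mul_comm _ _
        rw [← hyyg, h1] at hQlt
        exact absurd hQlt (not_lt.mpr h2)
      set S : RatFunc Fq := a * u + b with hS
      have hvau : v (a * u) = v a * v u := Valuation.map_mul v a u
      have hbau : v b < v (a * u) := by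
        rw [hvau]
        calc v b < v a := hba
        _ = v a * 1 := (mul_one _).symm
        _ ≤ v a * v u := mul_le_mul_right hu1 _
      have hvS : v S = v a * v u := by
        rw [hS, Valuation.map_add_eq_of_lt_left v hbau, hvau]
      have hS0 : S ≠ 0 := by
        intro h0
        rw [h0, Valuation.map_zero] at hvS
        exact (mul_ne_zero hva hvu0) hvS.symm
      have hSS : S * S - a * g = b * b - a * c := by rw [hg, hS]; ring
      set ε : RatFunc Fq := (a * g) / (S * S) with hεdef
      have hSSε : (S*S) * ε = a * g := by rw [hεdef]; field_simp
      have hvε : v ε < 1 := by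
        have hW : v S * v S = v a * v c := by
          rw [hvS]
          calc (v a * v u) * (v a * v u) = v a * (v a * (v u * v u)) := by
                simp [mul_comm, mul_left_comm, mul_assoc]
          _ = v a * v c := by rw [hvau2]
        have hlt : v a * v g < v a * v c := mul_lt_mul_of_lt_of_le₀ le_rfl hva hvg
        by_contra hcon
        push_neg at hcon
        have h1 : v ((S*S) * ε) = (v S * v S) * v ε := by
          rw [Valuation.map_mul, Valuation.map_mul]
        have h2 : v (a * g) = v a * v g := Valuation.map_mul v a g
        have h3 : v a * v c ≤ v a * v g := by
          calc v a * v c = (v S * v S) * 1 := by rw [hW, mul_one]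
          _ ≤ (v S * v S) * v ε := mul_le_mul_right hcon _
          _ = v ((S*S)*ε) := h1.symm
          _ = v a * v g := by rw [hSSε, h2]
        exact absurd hlt (not_lt.mpr h3)
      have hv2F : Valued.v (2 : RatFunc.CompletionAtInfty Fq) = 1 := by
        have h2ι : ((2 : RatFunc.CompletionAtInfty Fq)) = ι (2 : RatFunc Fq) := by
          rw [hι]; exact (map_ofNat (toInfty Fq) 2).symm
        rw [h2ι, hι, aux_val_toInfty, ← hvdef, hv2]
      obtain ⟨z, hz⟩ := aux_exists_sqrt_one_sub hv2F (ι ε)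
        (by rw [hι, aux_val_toInfty, ← hvdef]; exact hvε)
      have hιa : ι a ≠ 0 := fun h0 => ha0 ((map_eq_zero_iff ι (RingHom.injective ι)).mp h0)
      have hkey : (ι S * z) * (ι S * z) = ι b * ι b - ι a * ι c := by
        have h1 : S*S - (S*S) * ε = b*b - a*c := by rw [hSSε]; linear_combination hSS
        calc (ι S * z) * (ι S * z) = ι (S*S) * (z * z) := by rw [_root_.map_mul]; ring
        _ = ι (S*S) * (1 - ι ε) := by rw [hz]
        _ = ι (S*S) - ι ((S*S) * ε) := by rw [_root_.map_mul ι (S*S) ε]; ring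
        _ = ι ((S*S) - (S*S)*ε) := (map_sub ι _ _).symm
        _ = ι (b*b - a*c) := by rw [h1]
        _ = ι b * ι b - ι a * ι c := by rw [map_sub, _root_.map_mul, _root_.map_mul]
      set Z : RatFunc.CompletionAtInfty Fq := (ι S * z - ι b) / (ι a) with hZdef
      have hZa : ι a * Z = ι S * z - ι b := by
        rw [hZdef]; field_simp
      have hroot : ι a * (Z*Z) + (ι b + ι b) * Z + ι c = 0 := by
        have hmul : ι a * (ι a * (Z*Z) + (ι b + ι b) * Z + ι c)
            = (ι a * Z + ι b) * (ι a * Z + ι b) - (ι b * ι b - ι a * ι c) := by ring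
        have hz0 : ι a * (ι a * (Z*Z) + (ι b + ι b) * Z + ι c) = 0 := by
          rw [hmul, hZa]
          have h2 : ι S * z - ι b + ι b = ι S * z := by ring
          rw [h2, hkey]; ring
        exact (mul_eq_zero.mp hz0).resolve_left hιa
      have hzero : (![Z, 1, 0] : Fin 3 → RatFunc.CompletionAtInfty Fq) ⬝ᵥ (M.map ι).mulVec ![Z, 1, 0] = 0 := by
        rw [expandInf Z 1]
        calc ι a * (Z*Z) + (ι b + ι b) * (Z * 1) + ι c * (1*1)
            = ι a * (Z*Z) + (ι b + ι b) * Z + ι c := by ring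
        _ = 0 := hroot
      have hfinal := congr_fun (hdef _ hzero) 1
      simp at hfinal
    · have hmax : max (v (a * (x*x))) (v (c * (y*y))) = N := by
        rw [hT1, hT3, hN]
      have h13 : v (a * (x*x) + c * (y*y)) = N := by
        rw [Valuation.map_add_of_distinct_val v hne, hmax]
      have : a * (x*x) + (2*b) * (x*y) + c * (y*y)
          = (a * (x*x) + c * (y*y)) + (2*b) * (x*y) := by ring
      rw [this, Valuation.map_add_eq_of_lt_left v (by rw [h13]; exact hT2), h13]
  -- conclude
  rw [hBAeq, hQAeq, aux_degK_lt_iff, ← hvdef, hQN]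
  exact hBlt

end
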